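/- Fano-type bound for Rényi entropy (Ben-Bassat–Raviv): for α > 1 and θ = max_b p_b, H^(α)(P) ≤ (1/(1-α))·log₂(θ^α + (1-θ)^α/(B-1)^(α-1)), with equality for the near-uniform distribution. -/

import Mathlib

open Real Finset

lemma aux_mul_div_rpow {c x α : ℝ} (hc : 0 < c) (hx : 0 ≤ x) :
    c * (x / c) ^ α = x ^ α / c ^ (α - 1) := by
  rw [Real.div_rpow hx hc.le, Real.rpow_sub hc, Real.rpow_one]
  have hcα : (0:ℝ) < c ^ α := Real.rpow_pos_of_pos hc α
  field_simp

/-- Fano-type bound for Rényi entropy (Ben-Bassat–Raviv), with equality for the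
near-uniform distribution. -/
theorem renyi_entropy_fano_bound {B : ℕ} (hB : 2 ≤ B) (p : Fin B → ℝ)
    (hp : ∀ b, 0 ≤ p b) (hsum : ∑ b, p b = 1) (α : ℝ) (hα : 1 < α) :
    (1 / (1 - α)) * Real.logb 2 (∑ b, p b ^ α) ≤
      (1 / (1 - α)) * Real.logb 2
        ((Finset.univ.sup' ⟨⟨0, by omega⟩, Finset.mem_univ _⟩ p) ^ α +
          (1 - Finset.univ.sup' ⟨⟨0, by omega⟩, Finset.mem_univ _⟩ p) ^ α /
            ((B : ℝ) - 1) ^ (α - 1)) ∧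
    ∀ θ : ℝ, 1 / (B : ℝ) ≤ θ → θ ≤ 1 →
      (1 / (1 - α)) * Real.logb 2
          (∑ b : Fin B, (if b = ⟨0, by omega⟩ then θ else (1 - θ) / ((B : ℝ) - 1)) ^ α) =
        (1 / (1 - α)) * Real.logb 2 (θ ^ α + (1 - θ) ^ α / ((B : ℝ) - 1) ^ (α - 1)) := by
  have hB2 : (2:ℝ) ≤ (B:ℝ) := by exact_mod_cast hB
  have hB0 : (0:ℝ) < (B:ℝ) - 1 := by linarith
  have hneg : 1 / (1 - α) ≤ 0 := by
    apply div_nonpos_of_nonneg_of_nonpos <;> linarith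
  constructor
  · -- inequality part
    set θ := Finset.univ.sup' ⟨⟨0, by omega⟩, Finset.mem_univ _⟩ p with hθdef
    obtain ⟨i, -, hi⟩ := Finset.exists_mem_eq_sup' ⟨⟨0, by omega⟩, Finset.mem_univ _⟩ p
    have hθ_ge : ∀ b, p b ≤ θ := fun b => Finset.le_sup' p (Finset.mem_univ b)
    have hθpos : 0 < θ := by
      by_contra h
      push_neg at h
      have : ∑ b, p b ≤ 0 := Finset.sum_nonpos fun b _ => le_trans (hθ_ge b) h
      linarith
    set t := Finset.univ.erase i with htdef
    have hcardt : t.card = B - 1 := by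
      simp [htdef, Finset.card_erase_of_mem]
    have hcard : (t.card : ℝ) = (B:ℝ) - 1 := by
      rw [hcardt]; push_cast [Nat.cast_sub (by omega : 1 ≤ B)]; ring
    have hsum_t : ∑ b ∈ t, p b = 1 - θ := by
      have h := Finset.sum_erase_add Finset.univ p (Finset.mem_univ i)
      rw [hsum] at h
      have : θ = p i := hi
      rw [htdef]; linarith
    have hθ1 : θ ≤ 1 := by
      have : 0 ≤ ∑ b ∈ t, p b := Finset.sum_nonneg fun b _ => hp b
      linarith
    -- Jensen
    have hjensen : ((1 - θ) / ((B:ℝ) - 1)) ^ α ≤ (((B:ℝ) - 1))⁻¹ * ∑ b ∈ t, p b ^ α := by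
      have := Real.rpow_arith_mean_le_arith_mean_rpow (s := t)
        (fun _ => ((B:ℝ) - 1)⁻¹) p (fun _ _ => by positivity)
        (by rw [Finset.sum_const, nsmul_eq_mul, hcard, mul_inv_cancel₀ hB0.ne'])
        (fun b _ => hp b) hα.le
      rw [← Finset.mul_sum, ← Finset.mul_sum, hsum_t] at this
      calc ((1 - θ) / ((B:ℝ) - 1)) ^ α = (((B:ℝ) - 1)⁻¹ * (1 - θ)) ^ α := by
            rw [div_eq_inv_mul]
        _ ≤ _ := this
    have hkey : θ ^ α + (1 - θ) ^ α / ((B:ℝ) - 1) ^ (α - 1) ≤ ∑ b, p b ^ α := by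
      have hsplit : ∑ b, p b ^ α = θ ^ α + ∑ b ∈ t, p b ^ α := by
        have h := Finset.sum_erase_add Finset.univ (fun b => p b ^ α) (Finset.mem_univ i)
        have hpi : (fun b => p b ^ α) i = θ ^ α := by
          show p i ^ α = θ ^ α
          rw [hθdef, hi]
        rw [← h, show p i ^ α = θ ^ α from hpi]; ring
      have h2 : (1 - θ) ^ α / ((B:ℝ) - 1) ^ (α - 1) ≤ ∑ b ∈ t, p b ^ α := by
        rw [← aux_mul_div_rpow hB0 (by linarith : (0:ℝ) ≤ 1 - θ)]
        calc ((B:ℝ) - 1) * ((1 - θ) / ((B:ℝ) - 1)) ^ α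
            ≤ ((B:ℝ) - 1) * ((((B:ℝ) - 1))⁻¹ * ∑ b ∈ t, p b ^ α) :=
              mul_le_mul_of_nonneg_left hjensen hB0.le
          _ = ∑ b ∈ t, p b ^ α := by field_simp
      linarith
    have hApos : 0 < θ ^ α + (1 - θ) ^ α / ((B:ℝ) - 1) ^ (α - 1) := by
      have h1 : 0 < θ ^ α := Real.rpow_pos_of_pos hθpos α
      have h2 : 0 ≤ (1 - θ) ^ α / ((B:ℝ) - 1) ^ (α - 1) :=
        div_nonneg (Real.rpow_nonneg (by linarith) α) (Real.rpow_pos_of_pos hB0 (α - 1)).le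
      linarith
    have hlog := Real.logb_le_logb_of_le (b := 2) one_lt_two hApos hkey
    exact mul_le_mul_of_nonpos_left hlog hneg
  · -- equality part
    intro θ hθlo hθhi
    congr 1
    have hθ1 : (0:ℝ) ≤ 1 - θ := by linarith
    set i0 : Fin B := ⟨0, by omega⟩
    have h := Finset.sum_erase_add Finset.univ
      (fun b => (if b = i0 then θ else (1 - θ) / ((B : ℝ) - 1)) ^ α) (Finset.mem_univ i0)
    rw [← h]
    have hconst : ∑ b ∈ Finset.univ.erase i0,
        (if b = i0 then θ else (1 - θ) / ((B : ℝ) - 1)) ^ α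
        = ((B:ℝ) - 1) * ((1 - θ) / ((B : ℝ) - 1)) ^ α := by
      rw [Finset.sum_congr rfl (fun b hb => by
        rw [if_neg (Finset.ne_of_mem_erase hb)])]
      rw [Finset.sum_const, nsmul_eq_mul, Finset.card_erase_of_mem (Finset.mem_univ i0)]
      congr 1
      simp only [Finset.card_univ, Fintype.card_fin]
      push_cast [Nat.cast_sub (by omega : 1 ≤ B)]; ring
    have hite : (fun b : Fin B => (if b = i0 then θ else (1 - θ) / ((B : ℝ) - 1)) ^ α) i0
        = θ ^ α := by simp
    rw [hconst, show (if i0 = i0 then θ else (1 - θ) / ((B : ℝ) - 1)) ^ α = θ ^ α from hite, aux_mul_div_rpow hB0 hθ1]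
    ring
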